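/- If uₙ = Sₙ₋₂Sₙ₊₁/(Sₙ₋₁Sₙ) where (Sₙ) is any sequence of nonzero rationals satisfying Sₙ₊₅Sₙ = Sₙ₊₄Sₙ₊₁ + Sₙ₊₃Sₙ₊₂, then uₙ₊₁uₙ₋₁ = 1 + 1/uₙ for all n; in particular the point (uₙ, uₙ₊₁) lies on the biquadratic curve U²V + UV² - J·UV + U + V + 1 = 0 where J = u₀+u₁+1/u₀+1/u₁+1/(u₀u₁). -/

import Mathlib

lemma qrt_aux_key (a b c d e f : ℚ) (ha : a ≠ 0) (hb : b ≠ 0) (hc : c ≠ 0)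
    (hd : d ≠ 0) (he : e ≠ 0) (hf : f ≠ 0) (h : f * a = e * b + d * c) :
    c * f / (d * e) * (a * d / (b * c)) = 1 + 1 / (b * e / (c * d)) := by
  field_simp
  linear_combination h

lemma qrt_aux_step (x y z : ℚ) (hx : x ≠ 0) (hy : y ≠ 0) (hz : z ≠ 0)
    (h : z * x = 1 + 1 / y) :
    x + y + 1 / x + 1 / y + 1 / (x * y) = y + z + 1 / y + 1 / z + 1 / (y * z) := by
  have h' : z * x * y = y + 1 := by field_simp at h; linear_combination h
  field_simp
  linear_combination (x - z) * h'

lemma qrt_aux_curve (x y : ℚ) (hx : x ≠ 0) (hy : y ≠ 0) :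
    x ^ 2 * y + x * y ^ 2 - (x + y + 1 / x + 1 / y + 1 / (x * y)) * (x * y)
      + x + y + 1 = 0 := by
  field_simp
  ring

/-- The ratios uₙ = Sₙ₋₂Sₙ₊₁/(Sₙ₋₁Sₙ) of a Somos-5 sequence satisfy the QRT
recurrence uₙ₊₁uₙ₋₁ = 1 + 1/uₙ, and each point (uₙ, uₙ₊₁) lies on the
biquadratic curve U²V + UV² - J·UV + U + V + 1 = 0. -/
theorem somos5_to_qrt (S : ℤ → ℚ) (hne : ∀ n, S n ≠ 0)
    (hrec : ∀ n : ℤ, S (n + 5) * S n = S (n + 4) * S (n + 1) + S (n + 3) * S (n + 2)) :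
    let u : ℤ → ℚ := fun n => S (n - 2) * S (n + 1) / (S (n - 1) * S n)
    let J : ℚ := u 0 + u 1 + 1 / u 0 + 1 / u 1 + 1 / (u 0 * u 1)
    (∀ n : ℤ, u (n + 1) * u (n - 1) = 1 + 1 / u n) ∧
    (∀ n : ℤ, (u n) ^ 2 * u (n + 1) + u n * (u (n + 1)) ^ 2 - J * (u n * u (n + 1))
      + u n + u (n + 1) + 1 = 0) := by
  intro u J
  have hu : ∀ n : ℤ, u n ≠ 0 := fun n =>
    div_ne_zero (mul_ne_zero (hne _) (hne _)) (mul_ne_zero (hne _) (hne _))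
  have key : ∀ n : ℤ, u (n + 1) * u (n - 1) = 1 + 1 / u n := by
    intro n
    have h := hrec (n - 3)
    rw [show n - 3 + 5 = n + 2 by ring, show n - 3 + 4 = n + 1 by ring,
      show n - 3 + 1 = n - 2 by ring, show n - 3 + 3 = n by ring,
      show n - 3 + 2 = n - 1 by ring] at h
    show S (n + 1 - 2) * S (n + 1 + 1) / (S (n + 1 - 1) * S (n + 1)) *
        (S (n - 1 - 2) * S (n - 1 + 1) / (S (n - 1 - 1) * S (n - 1)))
      = 1 + 1 / (S (n - 2) * S (n + 1) / (S (n - 1) * S n))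
    rw [show n + 1 - 2 = n - 1 by ring, show n + 1 + 1 = n + 2 by ring,
      show n + 1 - 1 = n by ring, show n - 1 - 2 = n - 3 by ring,
      show n - 1 + 1 = n by ring, show n - 1 - 1 = n - 2 by ring]
    exact qrt_aux_key _ _ _ _ _ _ (hne _) (hne _) (hne _) (hne _) (hne _) (hne _) h
  refine ⟨key, ?_⟩
  have step : ∀ n : ℤ,
      u n + u (n + 1) + 1 / u n + 1 / u (n + 1) + 1 / (u n * u (n + 1)) =
      u (n + 1) + u (n + 2) + 1 / u (n + 1) + 1 / u (n + 2) + 1 / (u (n + 1) * u (n + 2)) := by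
    intro n
    have h := key (n + 1)
    rw [show n + 1 + 1 = n + 2 by ring, show n + 1 - 1 = n by ring] at h
    exact qrt_aux_step _ _ _ (hu n) (hu (n + 1)) (hu (n + 2)) h
  have conserved : ∀ n : ℤ,
      u n + u (n + 1) + 1 / u n + 1 / u (n + 1) + 1 / (u n * u (n + 1)) = J := by
    intro n
    induction n using Int.induction_on with
    | zero => rfl
    | succ k ih =>
        rw [show ((k : ℤ) + 1 + 1) = (k : ℤ) + 2 by ring, ← step k]
        exact ih
    | pred k ih =>
        have h := step (-(k : ℤ) - 1)
        rw [show (-(k : ℤ) - 1 + 1) = -(k : ℤ) by ring,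
          show (-(k : ℤ) - 1 + 2) = -(k : ℤ) + 1 by ring] at h
        rw [show (-(k : ℤ) - 1 + 1) = -(k : ℤ) by ring, h]
        exact ih
  intro n
  have hC := conserved n
  calc (u n) ^ 2 * u (n + 1) + u n * (u (n + 1)) ^ 2 - J * (u n * u (n + 1))
      + u n + u (n + 1) + 1
      = (u n) ^ 2 * u (n + 1) + u n * (u (n + 1)) ^ 2
        - (u n + u (n + 1) + 1 / u n + 1 / u (n + 1) + 1 / (u n * u (n + 1))) * (u n * u (n + 1))
        + u n + u (n + 1) + 1 := by rw [hC]
    _ = 0 := qrt_aux_curve _ _ (hu n) (hu (n + 1))
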